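/- For any three pairwise distinct complex numbers z₁, z₂, z₃, the Menger curvature satisfies c(z₁,z₂,z₃)² = Σ_{σ ∈ S₃} 1/( (z_{σ(1)} − z_{σ(3)}) · conj(z_{σ(2)} − z_{σ(3)}) ), where the sum ranges over the group S₃ of permutations of three elements and conj denotes complex conjugation; in particular the right-hand side is a nonnegative real number. -/

import Mathlib

open MeasureTheory Metric Set
open scoped ENNReal NNReal

/-- Menger curvature of a triple of points: the reciprocal of the circumradius,
equal to `2 · dist(x, L_{y,z}) / (dist(x,y) · dist(x,z))`, with the convention that
it is `0` for collinear (in particular non pairwise distinct) triples. -/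
noncomputable def mengerCurvature {E : Type*} [NormedAddCommGroup E] [InnerProductSpace ℝ E]
    (x y z : E) : ℝ :=
  letI := Classical.propDecidable
  if Collinear ℝ ({x, y, z} : Set E) then 0
  else 2 * Metric.infDist x (affineSpan ℝ ({y, z} : Set E) : Set E) / (dist x y * dist x z)

/-- The total Menger curvature `c²(A) = ∭_{A³} c(x,y,z)² dH¹dH¹dH¹`. -/
noncomputable def totalMengerCurvSq {E : Type*} [NormedAddCommGroup E] [InnerProductSpace ℝ E]
    [MeasurableSpace E] [BorelSpace E] (A : Set E) : ℝ≥0∞ :=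
  ∫⁻ x in A, ∫⁻ y in A, ∫⁻ z in A, ENNReal.ofReal (mengerCurvature x y z ^ 2)
    ∂(Measure.hausdorffMeasure 1) ∂(Measure.hausdorffMeasure 1) ∂(Measure.hausdorffMeasure 1)

section Aux

open Complex

/-- Distance from a point to the line through two distinct points of `ℂ`. -/
private lemma infDist_line_eq (x y z : ℂ) (hyz : y ≠ z) :
    Metric.infDist x (affineSpan ℝ ({y, z} : Set ℂ) : Set ℂ)
      = |((x - y) * (starRingEnd ℂ) (z - y)).im| / ‖z - y‖ := by
  have hb : z - y ≠ 0 := sub_ne_zero.2 (Ne.symm hyz)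
  have hbabs : (0:ℝ) < ‖z - y‖ := by
    simpa using (norm_pos_iff.mpr hb)
  set b := z - y with hbdef
  set w := x - y with hwdef
  apply le_antisymm
  · -- upper bound via explicit foot point
    set t : ℝ := (w * (starRingEnd ℂ) b).re / Complex.normSq b with htdef
    have hmem : y + (t:ℂ) * b ∈ (affineSpan ℝ ({y, z} : Set ℂ) : Set ℂ) := by
      have := AffineMap.lineMap_mem_affineSpan_pair (k := ℝ) t y z
      simpa [AffineMap.lineMap_apply, hbdef, smul_eq_mul, mul_comm, add_comm] using this
    have hle := Metric.infDist_le_dist_of_mem (x := x) hmem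
    refine hle.trans (le_of_eq ?_)
    have hxp : x - (y + (t:ℂ) * b) = w - (t:ℂ) * b := by rw [hwdef]; ring
    have key : ‖w - (t:ℂ) * b‖ * ‖b‖
        = |((w) * (starRingEnd ℂ) b).im| := by
      rw [← Complex.norm_conj b, ← norm_mul]
      have : (w - (t:ℂ) * b) * (starRingEnd ℂ) b
          = w * (starRingEnd ℂ) b - (t:ℝ) * Complex.normSq b := by
        rw [← Complex.mul_conj]
        ring
      rw [this]
      have hns : Complex.normSq b ≠ 0 := (Complex.normSq_pos.2 hb).ne'
      have hre : (w * (starRingEnd ℂ) b - (t:ℂ) * (Complex.normSq b : ℂ)).re = 0 := by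
        simp [htdef]
        field_simp
        ring
      have him : (w * (starRingEnd ℂ) b - (t:ℂ) * (Complex.normSq b : ℂ)).im
          = (w * (starRingEnd ℂ) b).im := by simp
      rw [Complex.norm_def, Complex.normSq_apply, hre, him]
      rw [show (0:ℝ)*0 + (w * (starRingEnd ℂ) b).im * (w * (starRingEnd ℂ) b).im
          = ((w * (starRingEnd ℂ) b).im)^2 by ring, Real.sqrt_sq_eq_abs]
    rw [dist_eq, hxp]
    field_simp at key ⊢
    linarith [key]
  · -- lower bound
    by_contra hlt
    push_neg at hlt
    have hne : (affineSpan ℝ ({y, z} : Set ℂ) : Set ℂ).Nonempty :=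
      ⟨y, SetLike.mem_coe.2 (left_mem_affineSpan_pair ℝ y z)⟩
    obtain ⟨p, hp, hdlt⟩ := (Metric.infDist_lt_iff hne).1 hlt
    rw [SetLike.mem_coe] at hp
    have hp' : (p - y) + y ∈ line[ℝ, y, z] := by simpa using hp
    rw [show (p - y) + y = (p - y) +ᵥ y from rfl, vadd_left_mem_affineSpan_pair] at hp'
    obtain ⟨r, hr⟩ := hp'
    have hxp : x - p = w - (r:ℂ) * b := by
      rw [hwdef, hbdef]
      have : (r:ℂ) * (z - y) = p - y := by
        simpa [smul_eq_mul] using hr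
      rw [this]; ring
    have key : |((x - p) * (starRingEnd ℂ) b).im| = |(w * (starRingEnd ℂ) b).im| := by
      rw [hxp]
      have : (w - (r:ℂ) * b) * (starRingEnd ℂ) b
          = w * (starRingEnd ℂ) b - (r:ℝ) * Complex.normSq b := by
        rw [← Complex.mul_conj]; ring
      rw [this]
      simp
    have h1 : |((x - p) * (starRingEnd ℂ) b).im| ≤ ‖x - p‖ * ‖b‖ := by
      calc |((x - p) * (starRingEnd ℂ) b).im| ≤ ‖(x - p) * (starRingEnd ℂ) b‖ :=
        Complex.abs_im_le_norm _
      _ = ‖x - p‖ * ‖b‖ := by rw [norm_mul]; simp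
    rw [key] at h1
    rw [dist_eq, lt_div_iff₀ hbabs] at hdlt
    linarith

private lemma melnikov_poly (a b p q : ℂ) (ha : a ≠ 0) (hb : b ≠ 0) (hp : p ≠ 0) (hq : q ≠ 0)
    (hab : a ≠ b) (hpq : p ≠ q) :
    1/(a*q) + 1/(b*p) + 1/(-((a-b)*q)) + 1/(-(b*(p-q))) + 1/(-((b-a)*p)) + 1/(-(a*(q-p)))
      = -(a*q - p*b)^2 / ((a*p) * (b*q) * ((a-b)*(p-q))) := by
  have hab' : a - b ≠ 0 := sub_ne_zero.2 hab
  have hpq' : p - q ≠ 0 := sub_ne_zero.2 hpq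
  have h1 : b - a ≠ 0 := by rw [← neg_sub]; exact neg_ne_zero.2 hab'
  have h2 : q - p ≠ 0 := by rw [← neg_sub]; exact neg_ne_zero.2 hpq'
  have hD : (a*p) * (b*q) * ((a-b)*(p-q)) ≠ 0 :=
    mul_ne_zero (mul_ne_zero (mul_ne_zero ha hp) (mul_ne_zero hb hq))
      (mul_ne_zero hab' hpq')
  have d1 : a*q ≠ 0 := mul_ne_zero ha hq
  have d2 : b*p ≠ 0 := mul_ne_zero hb hp
  have d3 : -((a-b)*q) ≠ 0 := neg_ne_zero.2 (mul_ne_zero hab' hq)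
  have d4 : -(b*(p-q)) ≠ 0 := neg_ne_zero.2 (mul_ne_zero hb hpq')
  have d5 : -((b-a)*p) ≠ 0 := neg_ne_zero.2 (mul_ne_zero h1 hp)
  have d6 : -(a*(q-p)) ≠ 0 := neg_ne_zero.2 (mul_ne_zero ha h2)
  rw [div_add_div _ _ d1 d2, div_add_div _ _ (mul_ne_zero d1 d2) d3,
    div_add_div _ _ (mul_ne_zero (mul_ne_zero d1 d2) d3) d4,
    div_add_div _ _ (mul_ne_zero (mul_ne_zero (mul_ne_zero d1 d2) d3) d4) d5,
    div_add_div _ _ (mul_ne_zero (mul_ne_zero (mul_ne_zero (mul_ne_zero d1 d2) d3) d4) d5) d6,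
    div_eq_div_iff
      (mul_ne_zero (mul_ne_zero (mul_ne_zero (mul_ne_zero (mul_ne_zero d1 d2) d3) d4) d5) d6) hD]
  ring

private lemma im_sq' (zz : ℂ) : ((zz.im : ℂ))^2 = -(zz - (starRingEnd ℂ) zz)^2/4 := by
  rw [Complex.sub_conj]
  push_cast
  rw [mul_pow, Complex.I_sq]
  ring

private lemma melnikov_alg (a b : ℂ) (ha : a ≠ 0) (hb : b ≠ 0) (hab : a ≠ b) :
    1/(a * (starRingEnd ℂ) b) + 1/(b * (starRingEnd ℂ) a)
      + 1/(-((a-b) * (starRingEnd ℂ) b)) + 1/(-(b * ((starRingEnd ℂ) a - (starRingEnd ℂ) b)))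
      + 1/(-((b-a) * (starRingEnd ℂ) a)) + 1/(-(a * ((starRingEnd ℂ) b - (starRingEnd ℂ) a)))
    = (((2 * (a * (starRingEnd ℂ) b).im)^2 : ℝ) : ℂ)
        / ((Complex.normSq a * Complex.normSq b * Complex.normSq (a-b) : ℝ) : ℂ) := by
  have hpa : (starRingEnd ℂ) a ≠ 0 := by simpa using ha
  have hpb : (starRingEnd ℂ) b ≠ 0 := by simpa using hb
  have hpq : (starRingEnd ℂ) a ≠ (starRingEnd ℂ) b :=
    fun h => hab ((RingHom.injective (starRingEnd ℂ)) h)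
  have hsq : ((Complex.normSq a * Complex.normSq b * Complex.normSq (a-b) : ℝ) : ℂ)
      = (a * (starRingEnd ℂ) a) * (b * (starRingEnd ℂ) b)
        * ((a-b) * ((starRingEnd ℂ) a - (starRingEnd ℂ) b)) := by
    push_cast
    rw [← Complex.mul_conj, ← Complex.mul_conj, ← Complex.mul_conj, map_sub]
  have him : (((2 * (a * (starRingEnd ℂ) b).im)^2 : ℝ) : ℂ)
      = -(a * (starRingEnd ℂ) b - (starRingEnd ℂ) a * b)^2 := by
    push_cast
    rw [mul_pow, im_sq']
    rw [map_mul, Complex.conj_conj]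
    ring
  rw [hsq, him]
  exact melnikov_poly a b _ _ ha hb hpa hpb hab hpq

private lemma perm_sum_expand (z₁ z₂ z₃ : ℂ) :
    (∑ σ : Equiv.Perm (Fin 3),
        1 / ((![z₁, z₂, z₃] (σ 0) - ![z₁, z₂, z₃] (σ 2)) *
          (starRingEnd ℂ) (![z₁, z₂, z₃] (σ 1) - ![z₁, z₂, z₃] (σ 2))))
    = 1/((z₁-z₃) * (starRingEnd ℂ) (z₂-z₃)) + 1/((z₂-z₃) * (starRingEnd ℂ) (z₁-z₃))
      + 1/((z₁-z₂) * (starRingEnd ℂ) (z₃-z₂)) + 1/((z₃-z₁) * (starRingEnd ℂ) (z₂-z₁))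
      + 1/((z₂-z₁) * (starRingEnd ℂ) (z₃-z₁)) + 1/((z₃-z₂) * (starRingEnd ℂ) (z₁-z₂)) := by
  set c : Equiv.Perm (Fin 3) := finRotate 3 with hc
  set e : Fin 6 → Equiv.Perm (Fin 3) :=
    ![1, Equiv.swap 0 1, Equiv.swap 1 2, Equiv.swap 0 2, c, c^2] with he
  have hbij : Function.Bijective e := by decide
  rw [← Fintype.sum_bijective e hbij _ _ (fun i => rfl), Fin.sum_univ_six]
  simp only [he, hc, Matrix.cons_val_zero, Matrix.cons_val_one, Matrix.head_cons,
    Matrix.cons_val_two, Matrix.tail_cons, Matrix.cons_val_three, Matrix.cons_val_four,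
    Matrix.cons_val_fin_one]
  rw [show (![(1 : Equiv.Perm (Fin 3)), Equiv.swap 0 1, Equiv.swap 1 2, Equiv.swap 0 2,
    finRotate 3, finRotate 3 ^ 2]) 5 = finRotate 3 ^ 2 from rfl]
  norm_num [show (![z₁, z₂, z₃] 2) = z₃ from rfl, show ∀ i : Fin 3, (1 : Equiv.Perm (Fin 3)) i = i from fun i => rfl,
    show ((Equiv.swap 0 1 : Equiv.Perm (Fin 3)) 0 = 1 ∧ (Equiv.swap 0 1 : Equiv.Perm (Fin 3)) 1 = 0
      ∧ (Equiv.swap 0 1 : Equiv.Perm (Fin 3)) 2 = 2) from by decide,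
    show ((Equiv.swap 1 2 : Equiv.Perm (Fin 3)) 0 = 0 ∧ (Equiv.swap 1 2 : Equiv.Perm (Fin 3)) 1 = 2
      ∧ (Equiv.swap 1 2 : Equiv.Perm (Fin 3)) 2 = 1) from by decide,
    show ((Equiv.swap 0 2 : Equiv.Perm (Fin 3)) 0 = 2 ∧ (Equiv.swap 0 2 : Equiv.Perm (Fin 3)) 1 = 1
      ∧ (Equiv.swap 0 2 : Equiv.Perm (Fin 3)) 2 = 0) from by decide,
    show ((finRotate 3 : Equiv.Perm (Fin 3)) 0 = 1 ∧ (finRotate 3 : Equiv.Perm (Fin 3)) 1 = 2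
      ∧ (finRotate 3 : Equiv.Perm (Fin 3)) 2 = 0) from by decide,
    show (((finRotate 3 : Equiv.Perm (Fin 3))^2) 0 = 2 ∧ ((finRotate 3:Equiv.Perm (Fin 3))^2) 1 = 0
      ∧ ((finRotate 3 : Equiv.Perm (Fin 3))^2) 2 = 1) from by decide]

end Aux

/-- The Melnikov identity: for pairwise distinct complex numbers,
`c(z₁,z₂,z₃)² = Σ_{σ ∈ S₃} 1/((z_{σ(1)} − z_{σ(3)}) · conj(z_{σ(2)} − z_{σ(3)}))`;
in particular the right-hand side is a nonnegative real number (it equals the coercion of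
the nonnegative real `c(z₁,z₂,z₃)²`). -/
theorem statement9 (z₁ z₂ z₃ : ℂ) (h12 : z₁ ≠ z₂) (h13 : z₁ ≠ z₃) (h23 : z₂ ≠ z₃) :
    (∑ σ : Equiv.Perm (Fin 3),
        1 / ((![z₁, z₂, z₃] (σ 0) - ![z₁, z₂, z₃] (σ 2)) *
          (starRingEnd ℂ) (![z₁, z₂, z₃] (σ 1) - ![z₁, z₂, z₃] (σ 2)))) =
      ((mengerCurvature z₁ z₂ z₃ ^ 2 : ℝ) : ℂ) := by
  classical
  set a : ℂ := z₁ - z₃ with hadef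
  set b : ℂ := z₂ - z₃ with hbdef
  have ha : a ≠ 0 := sub_ne_zero.2 h13
  have hb : b ≠ 0 := sub_ne_zero.2 h23
  have hab : a ≠ b := fun h => h12 (by simpa [hadef, hbdef, sub_left_inj] using h)
  -- rewrite the sum as the algebraic expression
  rw [perm_sum_expand]
  have e3 : (z₁-z₂) * (starRingEnd ℂ) (z₃-z₂) = -((a-b) * (starRingEnd ℂ) b) := by
    simp only [hadef, hbdef, map_sub]; ring
  have e4 : (z₃-z₁) * (starRingEnd ℂ) (z₂-z₁)
      = -(a * ((starRingEnd ℂ) b - (starRingEnd ℂ) a)) := by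
    simp only [hadef, hbdef, map_sub]; ring
  have e5 : (z₂-z₁) * (starRingEnd ℂ) (z₃-z₁) = -((b-a) * (starRingEnd ℂ) a) := by
    simp only [hadef, hbdef, map_sub]; ring
  have e6 : (z₃-z₂) * (starRingEnd ℂ) (z₁-z₂)
      = -(b * ((starRingEnd ℂ) a - (starRingEnd ℂ) b)) := by
    simp only [hadef, hbdef, map_sub]; ring
  rw [e3, e4, e5, e6]
  rw [show (1/(a * (starRingEnd ℂ) b) + 1/(b * (starRingEnd ℂ) a)
      + 1/(-((a-b) * (starRingEnd ℂ) b)) + 1/(-(a * ((starRingEnd ℂ) b - (starRingEnd ℂ) a)))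
      + 1/(-((b-a) * (starRingEnd ℂ) a)) + 1/(-(b * ((starRingEnd ℂ) a - (starRingEnd ℂ) b))))
    = (1/(a * (starRingEnd ℂ) b) + 1/(b * (starRingEnd ℂ) a)
      + 1/(-((a-b) * (starRingEnd ℂ) b)) + 1/(-(b * ((starRingEnd ℂ) a - (starRingEnd ℂ) b)))
      + 1/(-((b-a) * (starRingEnd ℂ) a)) + 1/(-(a * ((starRingEnd ℂ) b - (starRingEnd ℂ) a))))
    from by ring, melnikov_alg a b ha hb hab]
  -- now reduce to a real identity
  rw [← Complex.ofReal_div, Complex.ofReal_inj]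
  set d : ℝ := (a * (starRingEnd ℂ) b).im with hddef
  by_cases hcol : Collinear ℝ ({z₁, z₂, z₃} : Set ℂ)
  · -- collinear case: both sides vanish
    have hz₁ : z₁ ∈ line[ℝ, z₂, z₃] :=
      hcol.mem_affineSpan_of_mem_of_ne (Set.mem_insert_of_mem _ (Set.mem_insert _ _))
        (Set.mem_insert_of_mem _ (Set.mem_insert_of_mem _ rfl)) (Set.mem_insert _ _) h23
    have hz₁' : (z₁ - z₂) + z₂ ∈ line[ℝ, z₂, z₃] := by simpa using hz₁
    rw [show (z₁ - z₂) + z₂ = (z₁ - z₂) +ᵥ z₂ from rfl, vadd_left_mem_affineSpan_pair] at hz₁'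
    obtain ⟨r, hr⟩ := hz₁'
    have hr' : (r:ℂ) * (z₃ - z₂) = z₁ - z₂ := by simpa [smul_eq_mul] using hr
    have hd0 : d = 0 := by
      have hab' : a * (starRingEnd ℂ) b = (((1 - r) * Complex.normSq (z₂ - z₃) : ℝ) : ℂ) := by
        have h1 : a = (((1:ℝ) - r : ℝ) : ℂ) * (z₂ - z₃) := by
          rw [hadef]
          push_cast
          linear_combination -hr'
        rw [h1, hbdef]
        push_cast
        rw [← Complex.mul_conj]
        ring
      rw [hddef, hab']
      simp
    have hm : mengerCurvature z₁ z₂ z₃ = 0 := by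
      rw [mengerCurvature]
      simp [hcol]
    rw [hm, hd0]
    simp
  · -- non-collinear case
    have hm : mengerCurvature z₁ z₂ z₃
        = 2 * Metric.infDist z₁ (affineSpan ℝ ({z₂, z₃} : Set ℂ) : Set ℂ)
            / (dist z₁ z₂ * dist z₁ z₃) := by
      rw [mengerCurvature]
      simp [hcol]
    rw [hm, infDist_line_eq z₁ z₂ z₃ h23]
    have him : ((z₁ - z₂) * (starRingEnd ℂ) (z₃ - z₂)).im = -d := by
      have : (z₁ - z₂) * (starRingEnd ℂ) (z₃ - z₂)
          = -(a * (starRingEnd ℂ) b) + ((Complex.normSq b : ℝ) : ℂ) := by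
        rw [← Complex.mul_conj]
        simp only [hadef, hbdef, map_sub]
        ring
      rw [this]
      simp [hddef]
    rw [him, abs_neg]
    rw [show dist z₁ z₂ = ‖a - b‖ by
        rw [Complex.dist_eq]; congr 1; rw [hadef, hbdef]; ring,
      show dist z₁ z₃ = ‖a‖ from Complex.dist_eq z₁ z₃,
      show z₃ - z₂ = -b by rw [hbdef]; ring, norm_neg]
    have hA : ‖a‖ ≠ 0 := by simpa using ha
    have hB : ‖b‖ ≠ 0 := by simpa using hb
    have hAB : ‖a - b‖ ≠ 0 := norm_ne_zero_iff.mpr (sub_ne_zero.2 hab)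
    rw [← Complex.sq_norm a, ← Complex.sq_norm b, ← Complex.sq_norm (a-b)]
    have habs2 : |d| ^ 2 = d ^ 2 := sq_abs d
    field_simp
    ring_nf
    rw [habs2]
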